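/- For every m ∈ ℕ, the clique number and the fractional clique number of the contradiction graph G_m(H) satisfy ω_m ≤ ω*_m ≤ 2^m; that is, every clique of G_m(H) has at most 2^m vertices and every fractional clique δ of G_m(H) has size |δ| ≤ 2^m. -/

import Mathlib

open MeasureTheory
open scoped ENNReal

namespace ContradictionGraph

variable {X : Type*}

/-- A hypothesis `h : X → Bool` is consistent with the dataset `S` of size `m` if it labels
every example in `S` correctly. -/
def Consistent (h : X → Bool) {m : ℕ} (S : Fin m → X × Bool) : Prop :=
  ∀ i, h (S i).1 = (S i).2

/-- A dataset `S` is realizable by the concept class `H` if some hypothesis in `H` is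
consistent with it. -/
def Realizable (H : Set (X → Bool)) {m : ℕ} (S : Fin m → X × Bool) : Prop :=
  ∃ h ∈ H, Consistent h S

/-- Two datasets contradict each other if there is a point `x` such that one of them contains
the labeled example `(x, 0)` and the other contains `(x, 1)`. -/
def Contradicts {m : ℕ} (S S' : Fin m → X × Bool) : Prop :=
  ∃ x : X, ((∃ i, S i = (x, false)) ∧ (∃ j, S' j = (x, true))) ∨
    ((∃ i, S i = (x, true)) ∧ (∃ j, S' j = (x, false)))

/-- The vertex set of the contradiction graph `G_m(H)`: all `H`-realizable datasets of
size `m`. -/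
abbrev Vm (H : Set (X → Bool)) (m : ℕ) : Type _ :=
  {S : Fin m → X × Bool // Realizable H S}

/-- A clique in the contradiction graph `G_m(H)`: a set of vertices every two distinct members
of which contradict each other. -/
def IsClique (H : Set (X → Bool)) (m : ℕ) (C : Set (Vm H m)) : Prop :=
  ∀ S ∈ C, ∀ S' ∈ C, S ≠ S' → Contradicts S.1 S'.1

/-- An independent set in the contradiction graph `G_m(H)`: a set of vertices no two of which
are adjacent (i.e. no two distinct members contradict each other). -/
def IsIndep (H : Set (X → Bool)) (m : ℕ) (I : Set (Vm H m)) : Prop :=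
  ∀ S ∈ I, ∀ S' ∈ I, S ≠ S' → ¬ Contradicts S.1 S'.1

/-- The clique number `ω_m` of `G_m(H)`: the supremum of the sizes of cliques (in `ℕ∞`). -/
noncomputable def cliqueNum (H : Set (X → Bool)) (m : ℕ) : ℕ∞ :=
  ⨆ (C : Set (Vm H m)) (_ : IsClique H m C), C.encard

/-- The clique dimension `CD(H) = sup { m : ω_m = 2^m } ∈ ℕ ∪ {∞}`. -/
noncomputable def cliqueDim (H : Set (X → Bool)) : ℕ∞ :=
  ⨆ (m : ℕ) (_ : cliqueNum H m = 2 ^ m), (m : ℕ∞)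

/-- A fractional clique of `G_m(H)`: a nonnegative weight function on the vertices such that
the total weight of every independent set is at most `1`. -/
def IsFracClique (H : Set (X → Bool)) (m : ℕ) (δ : Vm H m → ℝ≥0∞) : Prop :=
  ∀ I : Set (Vm H m), IsIndep H m I → ∑' S : I, δ S.1 ≤ 1

/-- The fractional clique number `ω*_m` of `G_m(H)`: the supremum of the sizes
`|δ| = Σ_S δ(S)` of fractional cliques. -/
noncomputable def fracCliqueNum (H : Set (X → Bool)) (m : ℕ) : ℝ≥0∞ :=
  ⨆ (δ : Vm H m → ℝ≥0∞) (_ : IsFracClique H m δ), ∑' S, δ S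

/-- The fractional clique dimension `CD*(H) = sup { m : ω*_m = 2^m } ∈ ℕ ∪ {∞}`. -/
noncomputable def fracCliqueDim (H : Set (X → Bool)) : ℕ∞ :=
  ⨆ (m : ℕ) (_ : fracCliqueNum H m = 2 ^ m), (m : ℕ∞)

end ContradictionGraph

namespace ContradictionGraph

lemma coe_iSup_le_aux {ι : Sort*} {f : ι → ℕ∞} {x : ℝ≥0∞}
    (h : ∀ i, (f i : ℝ≥0∞) ≤ x) : ((⨆ i, f i : ℕ∞) : ℝ≥0∞) ≤ x := by
  rcases eq_or_ne (⨆ i, f i) ⊤ with htop | hne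
  · rw [htop, ENat.toENNReal_top, top_le_iff]
    have hn : ∀ n : ℕ, (n : ℝ≥0∞) ≤ x := by
      intro n
      obtain ⟨i, hi⟩ := (iSup_eq_top (f := f)).1 htop (n : ℕ∞) (by simp)
      calc (n : ℝ≥0∞) = ((n : ℕ∞) : ℝ≥0∞) := (ENat.toENNReal_coe n).symm
        _ ≤ (f i : ℝ≥0∞) := ENat.toENNReal_le.mpr hi.le
        _ ≤ x := h i
    by_contra hx
    obtain ⟨n, hn'⟩ := ENNReal.exists_nat_gt hx
    exact absurd (hn n) (not_le.2 hn')
  · lift (⨆ i, f i) to ℕ using hne with n hn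
    rcases Nat.eq_zero_or_pos n with h0 | h0
    · simp [h0]
    · obtain ⟨k, rfl⟩ := Nat.exists_eq_succ_of_ne_zero h0.ne'
      have hk : ((k : ℕ∞)) < ⨆ i, f i := by
        rw [← hn]; exact_mod_cast Nat.lt_succ_self k
      obtain ⟨i, hi⟩ := lt_iSup_iff.1 hk
      have : ((k + 1 : ℕ) : ℕ∞) ≤ f i := by
        exact_mod_cast (ENat.add_one_le_iff (by simp)).2 hi
      have hs : ((k.succ : ℕ) : ℕ∞) ≤ f i := this
      exact le_trans (ENat.toENNReal_le.mpr hs) (h i)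

lemma not_contradicts_of_consistent {X : Type*} {m : ℕ} {h : X → Bool}
    {S S' : Fin m → X × Bool} (hS : Consistent h S) (hS' : Consistent h S') :
    ¬ Contradicts S S' := by
  rintro ⟨x, ⟨⟨i, hi⟩, ⟨j, hj⟩⟩ | ⟨⟨i, hi⟩, ⟨j, hj⟩⟩⟩
  · have h1 := hS i; have h2 := hS' j
    rw [hi] at h1; rw [hj] at h2; simp_all
  · have h1 := hS i; have h2 := hS' j
    rw [hi] at h1; rw [hj] at h2; simp_all

lemma fracClique_sum_le {X : Type*} {H : Set (X → Bool)} {m : ℕ}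
    (δ : Vm H m → ℝ≥0∞) (hδ : IsFracClique H m δ) (F : Finset (Vm H m)) :
    ∑ S ∈ F, δ S ≤ 2 ^ m := by
  classical
  set P : Finset X :=
    F.biUnion (fun S => (Finset.univ : Finset (Fin m)).image (fun i => (S.1 i).1)) with hPdef
  have hmemP : ∀ S ∈ F, ∀ i : Fin m, (S.1 i).1 ∈ P := by
    intro S hS i
    exact Finset.mem_biUnion.2 ⟨S, hS, Finset.mem_image.2 ⟨i, Finset.mem_univ i, rfl⟩⟩
  set ext : (↥P → Bool) → X → Bool :=
    fun g x => if hx : x ∈ P then g ⟨x, hx⟩ else false with hextdef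
  -- each "consistent with g" class is independent
  have key1 : ∀ g : ↥P → Bool,
      ∑ S ∈ F.filter (fun S => Consistent (ext g) S.1), δ S ≤ 1 := by
    intro g
    have hind : IsIndep H m ↑(F.filter (fun S => Consistent (ext g) S.1)) := by
      intro S hS S' hS' hne
      simp only [Finset.coe_filter, Set.mem_setOf_eq] at hS hS'
      exact not_contradicts_of_consistent hS.2 hS'.2
    have h2 := hδ _ hind
    rwa [Finset.tsum_subtype'] at h2
  -- counting lower bound
  have key2 : ∀ S ∈ F, (2 : ℕ) ^ P.card ≤
      2 ^ m * (Finset.univ.filter (fun g : ↥P → Bool => Consistent (ext g) S.1)).card := by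
    intro S hS
    obtain ⟨h, _, hcons⟩ := S.2
    set q : ↥P → Prop := fun p => ∃ i, (S.1 i).1 = p.val with hqdef
    have hqdec : DecidablePred q := fun _ => Classical.dec _
    -- surjection Fin m → {p // q p}
    have hcard_q : Fintype.card {p : ↥P // q p} ≤ m := by
      have hsurj : Function.Surjective
          (fun i : Fin m => (⟨⟨(S.1 i).1, hmemP S hS i⟩, ⟨i, rfl⟩⟩ : {p : ↥P // q p})) := by
        rintro ⟨⟨x, hx⟩, ⟨i, hi⟩⟩
        exact ⟨i, by simp [hi]⟩
      simpa using Fintype.card_le_of_surjective _ hsurj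
    -- injection from functions on the complement into the consistent class
    set Φ : ({p : ↥P // ¬ q p} → Bool) → (↥P → Bool) :=
      fun f p => if hq : q p then h p.val else f ⟨p, hq⟩ with hΦdef
    have hΦmem : ∀ f, Φ f ∈ Finset.univ.filter (fun g : ↥P → Bool => Consistent (ext g) S.1) := by
      intro f
      refine Finset.mem_filter.2 ⟨Finset.mem_univ _, ?_⟩
      intro i
      have hx : (S.1 i).1 ∈ P := hmemP S hS i
      have : ext (Φ f) (S.1 i).1 = Φ f ⟨(S.1 i).1, hx⟩ := by
        simp [hextdef, hx]
      rw [this, hΦdef]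
      have hq : q ⟨(S.1 i).1, hx⟩ := ⟨i, rfl⟩
      simp only [hq, dif_pos]
      exact hcons i
    have hΦinj : Function.Injective Φ := by
      intro f f' hff
      funext p
      have := congrFun hff p.1
      simpa [hΦdef, p.2] using this
    have hcard_le : Fintype.card ({p : ↥P // ¬ q p} → Bool) ≤
        (Finset.univ.filter (fun g : ↥P → Bool => Consistent (ext g) S.1)).card := by
      rw [← Fintype.card_coe]
      exact Fintype.card_le_of_injective (fun f => ⟨Φ f, hΦmem f⟩)
        (fun f f' hff => hΦinj (congrArg Subtype.val hff))
    have hsplit : P.card = Fintype.card {p : ↥P // q p} + Fintype.card {p : ↥P // ¬ q p} := by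
      have hqle : Fintype.card {p : ↥P // q p} ≤ Fintype.card ↥P := Fintype.card_subtype_le _
      have hcompl : Fintype.card {p : ↥P // ¬ q p}
          = Fintype.card ↥P - Fintype.card {p : ↥P // q p} := Fintype.card_subtype_compl q
      rw [← Fintype.card_coe P]
      omega
    calc (2 : ℕ) ^ P.card
        = 2 ^ Fintype.card {p : ↥P // q p} * 2 ^ Fintype.card {p : ↥P // ¬ q p} := by
          rw [hsplit, pow_add]
      _ ≤ 2 ^ m * 2 ^ Fintype.card {p : ↥P // ¬ q p} :=
          Nat.mul_le_mul_right _ (Nat.pow_le_pow_right (by norm_num) hcard_q)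
      _ ≤ 2 ^ m * (Finset.univ.filter (fun g : ↥P → Bool => Consistent (ext g) S.1)).card := by
          refine Nat.mul_le_mul_left _ ?_
          simpa [Fintype.card_fun] using hcard_le
  -- double counting
  have hswap : ∑ g : ↥P → Bool, ∑ S ∈ F.filter (fun S => Consistent (ext g) S.1), δ S
      = ∑ S ∈ F,
        (((Finset.univ.filter (fun g : ↥P → Bool => Consistent (ext g) S.1)).card : ℝ≥0∞)) * δ S := by
    simp_rw [Finset.sum_filter]
    rw [Finset.sum_comm]
    refine Finset.sum_congr rfl fun S _ => ?_
    rw [← Finset.sum_filter, Finset.sum_const, nsmul_eq_mul]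
  have hdouble : ∑ S ∈ F,
      (((Finset.univ.filter (fun g : ↥P → Bool => Consistent (ext g) S.1)).card : ℝ≥0∞)) * δ S
      ≤ (2 : ℝ≥0∞) ^ P.card := by
    rw [← hswap]
    calc ∑ g : ↥P → Bool, ∑ S ∈ F.filter (fun S => Consistent (ext g) S.1), δ S
        ≤ ∑ _g : ↥P → Bool, (1 : ℝ≥0∞) := Finset.sum_le_sum fun g _ => key1 g
      _ = (Fintype.card (↥P → Bool) : ℝ≥0∞) := by simp
      _ = (2 : ℝ≥0∞) ^ P.card := by
          rw [Fintype.card_fun, Fintype.card_coe]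
          push_cast
          norm_num
  have hmain : (2 : ℝ≥0∞) ^ P.card * ∑ S ∈ F, δ S ≤ (2 : ℝ≥0∞) ^ P.card * 2 ^ m := by
    rw [Finset.mul_sum]
    calc ∑ S ∈ F, (2 : ℝ≥0∞) ^ P.card * δ S
        ≤ ∑ S ∈ F, ((2 : ℝ≥0∞) ^ m *
            ((Finset.univ.filter (fun g : ↥P → Bool => Consistent (ext g) S.1)).card : ℝ≥0∞)) * δ S := by
          refine Finset.sum_le_sum fun S hS => ?_
          refine mul_le_mul_left ?_ (δ S)
          exact_mod_cast key2 S hS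
      _ = (2 : ℝ≥0∞) ^ m * ∑ S ∈ F,
            ((Finset.univ.filter (fun g : ↥P → Bool => Consistent (ext g) S.1)).card : ℝ≥0∞) * δ S := by
          rw [Finset.mul_sum]
          refine Finset.sum_congr rfl fun S _ => ?_
          rw [mul_assoc]
      _ ≤ (2 : ℝ≥0∞) ^ m * (2 : ℝ≥0∞) ^ P.card := mul_le_mul_right hdouble _
      _ = (2 : ℝ≥0∞) ^ P.card * 2 ^ m := mul_comm _ _
  exact (ENNReal.mul_le_mul_iff_right (by positivity) (ENNReal.pow_ne_top ENNReal.ofNat_ne_top)).1 hmain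

lemma fracClique_tsum_le {X : Type*} {H : Set (X → Bool)} {m : ℕ}
    (δ : Vm H m → ℝ≥0∞) (hδ : IsFracClique H m δ) : ∑' S, δ S ≤ 2 ^ m := by
  rw [ENNReal.tsum_eq_iSup_sum]
  exact iSup_le fun F => fracClique_sum_le δ hδ F

lemma clique_indicator_isFracClique {X : Type*} {H : Set (X → Bool)} {m : ℕ}
    {C : Set (Vm H m)} (hC : IsClique H m C) :
    IsFracClique H m (C.indicator fun _ => (1 : ℝ≥0∞)) := by
  intro I hI
  have hsub : ∀ a ∈ I ∩ C, ∀ b ∈ I ∩ C, a = b := by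
    intro S hS S' hS'
    by_contra hne
    exact hI S hS.1 S' hS'.1 hne (hC S hS.2 S' hS'.2 hne)
  calc ∑' S : I, (C.indicator fun _ => (1 : ℝ≥0∞)) S.1
      = ∑' S, I.indicator (C.indicator fun _ => (1 : ℝ≥0∞)) S := tsum_subtype I _
    _ = ∑' S, (I ∩ C).indicator (fun _ => (1 : ℝ≥0∞)) S := by rw [Set.indicator_indicator]
    _ = ∑' _ : ↥(I ∩ C), (1 : ℝ≥0∞) := (tsum_subtype _ _).symm
    _ = ((I ∩ C).encard : ℝ≥0∞) := ENNReal.tsum_set_one _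
    _ ≤ 1 := by
        rw [← ENat.toENNReal_one]
        exact ENat.toENNReal_le.2 (Set.encard_le_one_iff.2 fun a b ha hb => hsub a ha b hb)

/-- For every `m`, the clique number and the fractional clique number of the
contradiction graph `G_m(H)` satisfy `ω_m ≤ ω*_m ≤ 2^m`; that is, every clique of `G_m(H)` has
at most `2^m` vertices and every fractional clique `δ` of `G_m(H)` has size `|δ| ≤ 2^m`. -/
theorem clique_and_fracClique_le_two_pow {X : Type*} [Countable X]
    (H : Set (X → Bool)) (hH : H.Nonempty) (m : ℕ) :
    ((cliqueNum H m : ℝ≥0∞) ≤ fracCliqueNum H m ∧ fracCliqueNum H m ≤ 2 ^ m) ∧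
    (∀ C : Set (Vm H m), IsClique H m C → C.encard ≤ 2 ^ m) ∧
    (∀ δ : Vm H m → ℝ≥0∞, IsFracClique H m δ → ∑' S, δ S ≤ 2 ^ m) := by
  have part3 : ∀ δ : Vm H m → ℝ≥0∞, IsFracClique H m δ → ∑' S, δ S ≤ 2 ^ m :=
    fun δ hδ => fracClique_tsum_le δ hδ
  have part2' : ∀ C : Set (Vm H m), IsClique H m C → (C.encard : ℝ≥0∞) ≤ fracCliqueNum H m := by
    intro C hC
    have h1 := clique_indicator_isFracClique hC
    have h2 : (C.encard : ℝ≥0∞) = ∑' S, (C.indicator fun _ => (1 : ℝ≥0∞)) S := by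
      rw [← tsum_subtype]
      exact (ENNReal.tsum_set_one C).symm
    rw [h2]
    exact le_iSup₂ (f := fun δ (_ : IsFracClique H m δ) => ∑' S, δ S) _ h1
  have hfrac_le : fracCliqueNum H m ≤ 2 ^ m := iSup₂_le fun δ hδ => part3 δ hδ
  have h2m : ((2 ^ m : ℕ∞) : ℝ≥0∞) = 2 ^ m := by
    rw [ENat.toENNReal_pow]
    norm_num
  refine ⟨⟨?_, hfrac_le⟩, ?_, part3⟩
  · unfold cliqueNum
    apply coe_iSup_le_aux
    intro C
    apply coe_iSup_le_aux
    intro hC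
    exact part2' C hC
  · intro C hC
    have h3 := (part2' C hC).trans hfrac_le
    rw [← h2m] at h3
    exact ENat.toENNReal_le.1 h3

end ContradictionGraph
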